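/- (Corollary: 1-generic tensors are evaluation tensors.) Let k be a field, d ≥ 3, and W_1,…,W_d k-vector spaces each of dimension m ≥ 1. Let T : W_1^∨ × ⋯ × W_d^∨ → k be a concise multilinear map with dim_k Cen(T) ≥ m. Then the following are equivalent: (1) T is 1-generic, i.e. for every index i there exists α_i ∈ W_i^∨ such that the k-linear map Cen(T) → W_i^∨ sending (X_1,…,X_d) to α_i ∘ X_i is surjective; (2) T is isomorphic to an evaluation tensor, i.e. there exist a finite-dimensional commutative k-algebra A, a k-linear functional ε : A → k, and k-linear bijections σ_i : W_i^∨ → A such that T(α_1,…,α_d) = ε(σ_1(α_1)⋯σ_d(α_d)) for all α_1,…,α_d. Moreover, if these conditions hold, then A is Gorenstein and ε is a dual generator of A. -/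

import Mathlib

/-!
Statement 13: 1-generic tensors are evaluation tensors.
-/

open scoped BigOperators

set_option synthInstance.maxHeartbeats 1000000
set_option maxHeartbeats 1000000
set_option linter.unusedVariables false

namespace Stmt13

universe u

variable {k : Type u} [Field k] {d : ℕ} {W : Fin d → Type u}
  [∀ i, AddCommGroup (W i)] [∀ i, Module k (W i)]

/-- The centroid of a multilinear map `T : W₁^∨ × ⋯ × W_d^∨ → k`: the subspace of tuples
`X = (X₁,…,X_d)` of endomorphisms with `X_i ∘_i T = X_j ∘_j T` for all `i, j`, where
`X_i ∘_i T` is `T` with the `i`-th argument `α_i` replaced by `α_i ∘ X_i`. -/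
def centroid (T : MultilinearMap k (fun i : Fin d => Module.Dual k (W i)) k) :
    Submodule k (∀ i, W i →ₗ[k] W i) where
  carrier := {X | ∀ (i j : Fin d) (α : ∀ l : Fin d, Module.Dual k (W l)),
    T (Function.update α i ((X i).dualMap (α i))) =
      T (Function.update α j ((X j).dualMap (α j)))}
  add_mem' := by
    intro X Y hX hY i j α
    have h : ∀ l : Fin d, ((X + Y) l).dualMap (α l)
        = (X l).dualMap (α l) + (Y l).dualMap (α l) := by
      intro l; ext w; simp [LinearMap.dualMap_apply]
    rw [h i, h j, T.map_update_add, T.map_update_add, hX i j α, hY i j α]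
  zero_mem' := by
    intro i j α
    have h : ∀ l : Fin d, ((0 : ∀ i, W i →ₗ[k] W i) l).dualMap (α l) = 0 := by
      intro l; ext w; simp [LinearMap.dualMap_apply]
    rw [h i, h j,
      T.map_coord_zero (m := Function.update α i 0) i (Function.update_self i 0 α),
      T.map_coord_zero (m := Function.update α j 0) j (Function.update_self j 0 α)]
  smul_mem' := by
    intro c X hX i j α
    have h : ∀ l : Fin d, ((c • X) l).dualMap (α l) = c • (X l).dualMap (α l) := by
      intro l; ext w; simp [LinearMap.dualMap_apply]
    rw [h i, h j, T.map_update_smul, T.map_update_smul, hX i j α]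

/-- Conciseness in slot `i`. -/
def ConciseIn (T : MultilinearMap k (fun i : Fin d => Module.Dual k (W i)) k)
    (i : Fin d) : Prop :=
  ∀ α : Module.Dual k (W i),
    (∀ γ : ∀ l : Fin d, Module.Dual k (W l), γ i = α → T γ = 0) → α = 0

/-- Conciseness in every slot. -/
def Concise (T : MultilinearMap k (fun i : Fin d => Module.Dual k (W i)) k) : Prop :=
  ∀ i : Fin d, ConciseIn T i

/-- 1-genericity: for every slot `i` there is `α ∈ W_i^∨` such that the linear map
`Cen(T) → W_i^∨`, `X ↦ α ∘ X_i`, is surjective. -/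
def OneGeneric (T : MultilinearMap k (fun i : Fin d => Module.Dual k (W i)) k) : Prop :=
  ∀ i : Fin d, ∃ α : Module.Dual k (W i),
    Function.Surjective (fun X : centroid T => ((X : ∀ l, W l →ₗ[k] W l) i).dualMap α)

/-- `ε : A → k` is a dual generator: `a ↦ (x ↦ ε (a * x))` is a bijection `A → Dual_k A`.
An algebra admitting a dual generator is Gorenstein. -/
def IsDualGenerator (k : Type u) [Field k] (A : Type u) [CommRing A] [Algebra k A]
    (ε : A →ₗ[k] k) : Prop :=
  Function.Bijective fun a : A => ε ∘ₗ LinearMap.mulLeft k a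

/-- A presentation of `T` as an evaluation tensor: a finite-dimensional commutative
`k`-algebra `A`, a functional `ε : A → k` and linear bijections `σ_i : W_i^∨ → A` with
`T (α₁,…,α_d) = ε (σ₁ α₁ ⋯ σ_d α_d)`. -/
structure EvalPresentation (k : Type u) [Field k] {d : ℕ} (W : Fin d → Type u)
    [∀ i, AddCommGroup (W i)] [∀ i, Module k (W i)]
    (T : MultilinearMap k (fun i : Fin d => Module.Dual k (W i)) k) where
  A : Type u
  [commRing : CommRing A]
  [algebra : Algebra k A]
  [finite : FiniteDimensional k A]
  ε : A →ₗ[k] k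
  σ : ∀ i : Fin d, Module.Dual k (W i) ≃ₗ[k] A
  eval : ∀ α : ∀ i : Fin d, Module.Dual k (W i), T α = ε (∏ i, σ i (α i))

attribute [instance] EvalPresentation.commRing EvalPresentation.algebra
  EvalPresentation.finite

section Aux

variable (T : MultilinearMap k (fun i : Fin d => Module.Dual k (W i)) k)

lemma absorb {Y : ∀ i, W i →ₗ[k] W i} (hY : Y ∈ centroid T) {i j : Fin d}
    (hij : j ≠ i) (η : ∀ l : Fin d, Module.Dual k (W l)) (β : Module.Dual k (W i)) :
    T (Function.update (Function.update η i β) j ((Y j).dualMap (η j))) =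
      T (Function.update η i ((Y i).dualMap β)) := by
  have h := hY j i (Function.update η i β)
  rwa [Function.update_of_ne hij, Function.update_self, Function.update_idem] at h

lemma exists_third (hd : 3 ≤ d) (i j : Fin d) : ∃ l : Fin d, l ≠ i ∧ l ≠ j := by
  by_contra h
  push_neg at h
  have hsub : (Finset.univ : Finset (Fin d)) ⊆ {i, j} := by
    intro l _
    rcases ne_or_eq l i with hl | hl
    · simp [h l hl]
    · simp [hl]
  have := Finset.card_le_card hsub
  simp only [Finset.card_univ, Fintype.card_fin] at this
  have h2 : ({i, j} : Finset (Fin d)).card ≤ 2 :=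
    (Finset.card_insert_le _ _).trans (by simp)
  omega

lemma cross {X Y : ∀ i, W i →ₗ[k] W i} (hX : X ∈ centroid T) (hY : Y ∈ centroid T)
    {i l : Fin d} (hil : l ≠ i) (α : ∀ l : Fin d, Module.Dual k (W l)) :
    T (Function.update α i (((X * Y) i).dualMap (α i))) =
      T (Function.update α l (((Y * X) l).dualMap (α l))) := by
  have h1 : ((X * Y) i).dualMap (α i) = (Y i).dualMap ((X i).dualMap (α i)) := rfl
  have h2 : ((Y * X) l).dualMap (α l) = (X l).dualMap ((Y l).dualMap (α l)) := rfl
  rw [h1, h2, ← absorb T hY hil α ((X i).dualMap (α i)),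
    Function.update_comm (Ne.symm hil),
    absorb T hX (Ne.symm hil) α ((Y l).dualMap (α l))]

lemma mul_mem_centroid (hd : 3 ≤ d) {X Y : ∀ i, W i →ₗ[k] W i}
    (hX : X ∈ centroid T) (hY : Y ∈ centroid T) : X * Y ∈ centroid T := by
  intro i j α
  rcases eq_or_ne i j with rfl | hij
  · rfl
  obtain ⟨l, hli, hlj⟩ := exists_third hd i j
  rw [cross T hX hY hli α, ← cross T hX hY hlj α]

lemma one_mem_centroid : (1 : ∀ i, W i →ₗ[k] W i) ∈ centroid T := by
  intro i j α
  have h : ∀ l : Fin d, (((1 : ∀ i, W i →ₗ[k] W i)) l).dualMap (α l) = α l := fun l => rfl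
  rw [h i, h j, Function.update_eq_self, Function.update_eq_self]

lemma dualMap_eq_zero {V : Type u} [AddCommGroup V] [Module k V] {f : V →ₗ[k] V}
    (h : ∀ β : Module.Dual k V, f.dualMap β = 0) : f = 0 := by
  ext w
  rw [LinearMap.zero_apply, ← Module.forall_dual_apply_eq_zero_iff k (f w)]
  intro φ
  simpa using DFunLike.congr_fun (h φ) w

lemma eq_zero_of_updates {i : Fin d} (hci : ConciseIn T i) (g : Module.Dual k (W i))
    (h : ∀ γ : ∀ l : Fin d, Module.Dual k (W l), T (Function.update γ i g) = 0) :
    g = 0 := by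
  apply hci g
  intro γ hγ
  have := h γ
  rwa [← hγ, Function.update_eq_self] at this

lemma centroid_mul_comm (hd : 3 ≤ d) (hconc : Concise T) {X Y : ∀ i, W i →ₗ[k] W i}
    (hX : X ∈ centroid T) (hY : Y ∈ centroid T) : X * Y = Y * X := by
  have hYX := mul_mem_centroid T hd hY hX
  have key : ∀ (i : Fin d) (α : ∀ l : Fin d, Module.Dual k (W l)),
      T (Function.update α i (((X * Y) i).dualMap (α i))) =
        T (Function.update α i (((Y * X) i).dualMap (α i))) := by
    intro i α
    obtain ⟨l, hli, -⟩ := exists_third hd i i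
    rw [cross T hX hY hli α]
    exact hYX l i α
  have hz : ∀ (i : Fin d) (β : Module.Dual k (W i)),
      ((X * Y) i).dualMap β = ((Y * X) i).dualMap β := by
    intro i β
    have hsub : ∀ γ : ∀ l : Fin d, Module.Dual k (W l),
        T (Function.update γ i (((X * Y) i).dualMap β - ((Y * X) i).dualMap β)) = 0 := by
      intro γ
      rw [T.map_update_sub]
      have e1 : Function.update γ i (((X * Y) i).dualMap β)
          = Function.update (Function.update γ i β) i
            (((X * Y) i).dualMap ((Function.update γ i β) i)) := by
        rw [Function.update_self, Function.update_idem]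
      have e2 : Function.update γ i (((Y * X) i).dualMap β)
          = Function.update (Function.update γ i β) i
            (((Y * X) i).dualMap ((Function.update γ i β) i)) := by
        rw [Function.update_self, Function.update_idem]
      rw [e1, e2, key i (Function.update γ i β), sub_self]
    have hsz := eq_zero_of_updates T (hconc i) _ hsub
    exact sub_eq_zero.mp hsz
  have hD : ∀ i : Fin d, (X * Y - Y * X) i = 0 := by
    intro i
    apply dualMap_eq_zero
    intro β
    have e : ((X * Y - Y * X) i).dualMap β
        = ((X * Y) i).dualMap β - ((Y * X) i).dualMap β := by
      ext w; simp
    rw [e, hz i β, sub_self]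
  have : X * Y - Y * X = 0 := funext hD
  exact sub_eq_zero.mp this

/-- The centroid as a subalgebra (needs `d ≥ 3`). -/
def cenAlg (hd : 3 ≤ d) : Subalgebra k (∀ i, W i →ₗ[k] W i) :=
  (centroid T).toSubalgebra (one_mem_centroid T)
    (fun _ _ hx hy => mul_mem_centroid T hd hx hy)

lemma mem_cen {hd : 3 ≤ d} {x : ∀ i, W i →ₗ[k] W i} (hx : x ∈ cenAlg T hd) :
    x ∈ centroid T := (Submodule.mem_toSubalgebra).mp hx

/-- Evaluation map `Cen(T) → W_i^∨`. -/
def evA (hd : 3 ≤ d) (i : Fin d) (α : Module.Dual k (W i)) :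
    ↥(cenAlg T hd) →ₗ[k] Module.Dual k (W i) where
  toFun X := ((X : ∀ l, W l →ₗ[k] W l) i).dualMap α
  map_add' X Y := by ext w; simp
  map_smul' c X := by ext w; simp

lemma evA_injective (hd : 3 ≤ d) (hconc : Concise T) {i : Fin d}
    {α : Module.Dual k (W i)}
    (hsurj : Function.Surjective (evA T hd i α)) :
    Function.Injective (evA T hd i α) := by
  have hker : ∀ X : ↥(cenAlg T hd), evA T hd i α X = 0 → X = 0 := by
    intro X h0
    set Z : ∀ l, W l →ₗ[k] W l := (X : ∀ l, W l →ₗ[k] W l) with hZdef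
    have hZ : Z ∈ centroid T := mem_cen T X.2
    have h0' : (Z i).dualMap α = 0 := h0
    -- Step A : Z j = 0 for j ≠ i
    have stepA : ∀ j : Fin d, j ≠ i → Z j = 0 := by
      intro j hji
      apply dualMap_eq_zero
      intro β
      apply eq_zero_of_updates T (hconc j)
      intro γ
      obtain ⟨Y, hYγ⟩ := hsurj (γ i)
      set η : ∀ l : Fin d, Module.Dual k (W l) :=
        Function.update (Function.update γ i α) j β with hη
      have hηi : η i = α := by rw [hη, Function.update_of_ne (Ne.symm hji), Function.update_self]
      have hηj : η j = β := by rw [hη, Function.update_self]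
      have hrw : Function.update γ j ((Z j).dualMap β)
          = Function.update (Function.update η i
              (((Y : ∀ l, W l →ₗ[k] W l) i).dualMap (η i))) j ((Z j).dualMap (η j)) := by
        have hYγ' : ((Y : ∀ l, W l →ₗ[k] W l) i).dualMap α = γ i := hYγ
        rw [hηi, hηj, hYγ']
        funext l
        rcases eq_or_ne l j with rfl | hlj
        · rw [Function.update_self, Function.update_self]
        · rw [Function.update_of_ne hlj, Function.update_of_ne hlj]
          rcases eq_or_ne l i with rfl | hli
          · rw [Function.update_self]
          · rw [Function.update_of_ne hli, hη, Function.update_of_ne hlj,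
              Function.update_of_ne hli]
      rw [hrw, absorb T hZ hji η (((Y : ∀ l, W l →ₗ[k] W l) i).dualMap (η i)), hηi]
      have hYc : (Y : ∀ l, W l →ₗ[k] W l) ∈ centroid T := mem_cen T Y.2
      have hcomm : (Y : ∀ l, W l →ₗ[k] W l) * Z = Z * (Y : ∀ l, W l →ₗ[k] W l) :=
        centroid_mul_comm T hd hconc hYc hZ
      have : (Z i).dualMap (((Y : ∀ l, W l →ₗ[k] W l) i).dualMap α)
          = (((Y : ∀ l, W l →ₗ[k] W l) * Z) i).dualMap α := rfl
      rw [this, hcomm]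
      have : ((Z * (Y : ∀ l, W l →ₗ[k] W l)) i).dualMap α
          = ((Y : ∀ l, W l →ₗ[k] W l) i).dualMap ((Z i).dualMap α) := rfl
      rw [this, h0', map_zero]
      exact T.map_coord_zero i (Function.update_self i 0 _)
    -- Step B : Z i = 0
    have stepB : Z i = 0 := by
      obtain ⟨j, hji, -⟩ := exists_third hd i i
      apply dualMap_eq_zero
      intro β
      apply eq_zero_of_updates T (hconc i)
      intro γ
      have e : Function.update γ i ((Z i).dualMap β)
          = Function.update (Function.update γ i β) i
              ((Z i).dualMap ((Function.update γ i β) i)) := by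
        rw [Function.update_self, Function.update_idem]
      rw [e, hZ i j (Function.update γ i β), stepA j hji]
      have : (0 : W j →ₗ[k] W j).dualMap ((Function.update γ i β) j) = 0 := by
        ext w; simp
      rw [this]
      exact T.map_coord_zero j (Function.update_self j 0 _)
    ext l
    rcases eq_or_ne l i with rfl | hl
    · rw [show ((X : ∀ l, W l →ₗ[k] W l)) l = Z l from rfl, stepB]; rfl
    · rw [show ((X : ∀ l, W l →ₗ[k] W l)) l = Z l from rfl, stepA l hl]; rfl
  intro X Y hXY
  have : evA T hd i α (X - Y) = 0 := by rw [map_sub, hXY, sub_self]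
  have := hker _ this
  rwa [sub_eq_zero] at this

lemma foldL (hd : 3 ≤ d) (L : List (Fin d)) :
    ∀ i0 : Fin d, i0 ∉ L → L.Nodup → ∀ (Z : Fin d → ↥(cenAlg T hd))
      (Z0 : ∀ l, W l →ₗ[k] W l), Z0 ∈ centroid T →
      ∀ (γ : ∀ l : Fin d, Module.Dual k (W l)),
    T (Function.update
        (fun t => if t ∈ L then ((Z t : ∀ l, W l →ₗ[k] W l) t).dualMap (γ t) else γ t)
        i0 ((Z0 i0).dualMap (γ i0)))
      = T (Function.update γ i0
          (((Z0 * (L.map (fun t => (Z t : ∀ l, W l →ₗ[k] W l))).prod) i0).dualMap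
            (γ i0))) := by
  induction L with
  | nil =>
    intro i0 _ _ Z Z0 _ γ
    simp only [List.not_mem_nil, if_false, List.map_nil, List.prod_nil, mul_one]
  | cons j L' ih =>
    intro i0 hi0 hnd Z Z0 hZ0 γ
    have hi0j : i0 ≠ j := fun h => hi0 (h ▸ List.mem_cons_self (a := j) (l := L'))
    have hi0L' : i0 ∉ L' := fun h => hi0 (List.mem_cons_of_mem j h)
    have hjL' : j ∉ L' := (List.nodup_cons.mp hnd).1
    have hnd' : L'.Nodup := (List.nodup_cons.mp hnd).2
    set δ : ∀ l : Fin d, Module.Dual k (W l) :=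
      fun t => if t ∈ L' then ((Z t : ∀ l, W l →ₗ[k] W l) t).dualMap (γ t) else γ t
      with hδ
    have hδj : δ j = γ j := by rw [hδ]; simp [hjL']
    have hδi0 : δ i0 = γ i0 := by rw [hδ]; simp [hi0L']
    have hlam : (fun t => if t ∈ j :: L'
          then ((Z t : ∀ l, W l →ₗ[k] W l) t).dualMap (γ t) else γ t)
        = Function.update δ j ((((Z j : ∀ l, W l →ₗ[k] W l)) j).dualMap (γ j)) := by
      funext t
      rcases eq_or_ne t j with rfl | htj
      · rw [Function.update_self, if_pos (List.mem_cons_self (a := t) (l := L'))]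
      · rw [Function.update_of_ne htj, hδ]
        simp [List.mem_cons, htj]
    rw [hlam, Function.update_comm hi0j.symm]
    have habs := absorb T (mem_cen T (Z j).2) hi0j.symm δ ((Z0 i0).dualMap (δ i0))
    rw [hδi0] at habs
    rw [show (((Z j : ∀ l, W l →ₗ[k] W l)) j).dualMap (γ j)
        = (((Z j : ∀ l, W l →ₗ[k] W l)) j).dualMap (δ j) by rw [hδj]]
    rw [habs]
    have hcomp : ((Z j : ∀ l, W l →ₗ[k] W l) i0).dualMap ((Z0 i0).dualMap (γ i0))
        = (((Z0 * (Z j : ∀ l, W l →ₗ[k] W l)) i0)).dualMap (γ i0) := rfl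
    rw [hcomp, ih i0 hi0L' hnd' Z _ (mul_mem_centroid T hd hZ0 (mem_cen T (Z j).2)) γ,
      List.map_cons, List.prod_cons, ← mul_assoc]

/-- Any evaluation presentation of a tensor that is concise in slot 0 has `ε`
a dual generator. -/
lemma dualGen (hd : 3 ≤ d) (hconc : Concise T) (P : EvalPresentation k W T) :
    IsDualGenerator k P.A P.ε := by
  classical
  set i0 : Fin d := ⟨0, by omega⟩
  set F : P.A →ₗ[k] (P.A →ₗ[k] k) :=
    { toFun := fun a => P.ε ∘ₗ LinearMap.mulLeft k a
      map_add' := by intro a b; ext x; simp [add_mul]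
      map_smul' := by intro c a; ext x; simp [smul_mul_assoc] } with hF
  have key : ∀ c : P.A, F c = 0 → c = 0 := by
    intro c hc
    have h0 : ∀ x : P.A, P.ε (c * x) = 0 := by
      intro x
      have := DFunLike.congr_fun hc x
      simpa [hF] using this
    have hvan : ∀ β0 : Module.Dual k (W i0), (P.σ i0).symm (c * P.σ i0 β0) = 0 := by
      intro β0
      apply hconc i0
      intro γ hγ
      rw [P.eval, ← Finset.mul_prod_erase Finset.univ _ (Finset.mem_univ i0), hγ,
        LinearEquiv.apply_symm_apply, mul_assoc]
      exact h0 _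
    have h1 : c * P.σ i0 ((P.σ i0).symm 1) = 0 := by
      have := hvan ((P.σ i0).symm 1)
      rwa [LinearEquiv.map_eq_zero_iff] at this
    rwa [LinearEquiv.apply_symm_apply, mul_one] at h1
  have hinj : Function.Injective F := by
    intro a b hab
    have : F (a - b) = 0 := by rw [map_sub, hab, sub_self]
    have := key _ this
    rwa [sub_eq_zero] at this
  have hsurj : Function.Surjective F :=
    (LinearMap.injective_iff_surjective_of_finrank_eq_finrank
      (Subspace.dual_finrank_eq).symm).mp hinj
  exact ⟨hinj, hsurj⟩

/-- An evaluation presentation yields 1-genericity. -/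
lemma oneGeneric_of_presentation [∀ i, FiniteDimensional k (W i)]
    (P : EvalPresentation k W T) : OneGeneric T := by
  classical
  intro i
  refine ⟨(P.σ i).symm 1, ?_⟩
  intro β
  set a : P.A := P.σ i β with ha
  set g : ∀ l : Fin d, Module.Dual k (W l) →ₗ[k] Module.Dual k (W l) :=
    fun l => (P.σ l).symm.toLinearMap ∘ₗ LinearMap.mulLeft k a ∘ₗ (P.σ l).toLinearMap
    with hg
  set X : ∀ l, W l →ₗ[k] W l :=
    fun l => (Module.evalEquiv k (W l)).symm.toLinearMap ∘ₗ (g l).dualMap ∘ₗ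
      (Module.evalEquiv k (W l)).toLinearMap with hX
  have hXdual : ∀ (l : Fin d) (φ : Module.Dual k (W l)), (X l).dualMap φ = g l φ := by
    intro l φ
    ext w
    simp only [hX, LinearMap.dualMap_apply, LinearMap.coe_comp, Function.comp_apply,
      LinearEquiv.coe_coe, Module.apply_evalEquiv_symm_apply, LinearMap.dualMap_apply']
    simp [Module.evalEquiv_toLinearMap]
  have hσg : ∀ (l : Fin d) (φ : Module.Dual k (W l)), P.σ l (g l φ) = a * P.σ l φ := by
    intro l φ
    simp [hg]
  have hmem : X ∈ centroid T := by
    intro i' j' α'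
    have hup : ∀ (i' : Fin d),
        (fun l => P.σ l (Function.update α' i' ((X i').dualMap (α' i')) l))
          = Function.update (fun l => P.σ l (α' l)) i' (a * P.σ i' (α' i')) := by
      intro i'
      funext l
      rcases eq_or_ne l i' with rfl | hl
      · rw [Function.update_self, Function.update_self, hXdual, hσg]
      · rw [Function.update_of_ne hl, Function.update_of_ne hl]
    have hprod : ∀ (i' : Fin d),
        (∏ l, P.σ l (Function.update α' i' ((X i').dualMap (α' i')) l))
          = a * ∏ l, P.σ l (α' l) := by
      intro i'
      rw [show (∏ l, P.σ l (Function.update α' i' ((X i').dualMap (α' i')) l))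
          = ∏ l, Function.update (fun l => P.σ l (α' l)) i' (a * P.σ i' (α' i')) l by
        rw [hup i']]
      rw [Finset.prod_update_of_mem (Finset.mem_univ i'), ← Finset.erase_eq,
        ← Finset.mul_prod_erase Finset.univ (fun l => P.σ l (α' l))
          (Finset.mem_univ i'), mul_assoc]
    rw [P.eval, P.eval, hprod i', hprod j']
  refine ⟨⟨X, hmem⟩, ?_⟩
  show (X i).dualMap ((P.σ i).symm 1) = β
  rw [hXdual]
  have : g i ((P.σ i).symm 1) = (P.σ i).symm (a * 1) := by
    simp [hg]
  rw [this, mul_one, ha, LinearEquiv.symm_apply_apply]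

/-- The linear functional `x ↦ T (update αv i0 x)`. -/
def slotFun (i0 : Fin d) (αv : ∀ l : Fin d, Module.Dual k (W l)) :
    Module.Dual k (W i0) →ₗ[k] k where
  toFun x := T (Function.update αv i0 x)
  map_add' x y := T.map_update_add αv i0 x y
  map_smul' c x := T.map_update_smul αv i0 c x

end Aux

/-- **1-generic tensors are evaluation tensors.** Let `d ≥ 3`, `dim W_i = m ≥ 1`, and let
`T` be concise with `dim Cen(T) ≥ m`. Then `T` is 1-generic if and only if `T` is
isomorphic to an evaluation tensor; moreover, in that case, for any such presentation the
algebra `A` is Gorenstein with dual generator `ε`. -/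
theorem one_generic_iff_evaluation
    (hd : 3 ≤ d) (m : ℕ) (hm : 1 ≤ m)
    [∀ i, FiniteDimensional k (W i)] (hdim : ∀ i, Module.finrank k (W i) = m)
    (T : MultilinearMap k (fun i : Fin d => Module.Dual k (W i)) k)
    (hconc : Concise T) (hcen : m ≤ Module.finrank k (centroid T)) :
    (OneGeneric T ↔ Nonempty (EvalPresentation k W T)) ∧
    (OneGeneric T → ∀ P : EvalPresentation k W T, IsDualGenerator k P.A P.ε) := by
  classical
  refine ⟨⟨fun hgen => ?_, fun hP => oneGeneric_of_presentation T hP.some⟩,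
    fun _ P => dualGen T hd hconc P⟩
  choose αv hαv using hgen
  have hsurjA : ∀ i, Function.Surjective (evA T hd i (αv i)) := by
    intro i β
    obtain ⟨X, hX⟩ := hαv i β
    exact ⟨⟨X.1, (Submodule.mem_toSubalgebra).mpr X.2⟩, hX⟩
  have hinjA : ∀ i, Function.Injective (evA T hd i (αv i)) :=
    fun i => evA_injective T hd hconc (hsurjA i)
  letI : CommRing ↥(cenAlg T hd) :=
    { (inferInstance : Ring ↥(cenAlg T hd)) with
      mul_comm := fun a b => Subtype.ext (by
        rw [MulMemClass.coe_mul, MulMemClass.coe_mul]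
        exact centroid_mul_comm T hd hconc (mem_cen T a.2) (mem_cen T b.2)) }
  set i0 : Fin d := ⟨0, by omega⟩ with hi0
  set eA : ∀ i, ↥(cenAlg T hd) ≃ₗ[k] Module.Dual k (W i) :=
    fun i => LinearEquiv.ofBijective (evA T hd i (αv i)) ⟨hinjA i, hsurjA i⟩ with heA
  set L0 : Module.Dual k (W i0) →ₗ[k] k := slotFun T i0 αv with hL0
  refine ⟨@EvalPresentation.mk k _ d W _ _ T (↥(cenAlg T hd)) inferInstance
    inferInstance ?_ (L0 ∘ₗ evA T hd i0 (αv i0)) (fun i => (eA i).symm) ?_⟩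
  · infer_instance
  · intro β
    set Z : Fin d → ↥(cenAlg T hd) := fun t => (eA t).symm (β t) with hZdef
    have hZ : ∀ t, ((Z t : ∀ l, W l →ₗ[k] W l) t).dualMap (αv t) = β t := by
      intro t
      have := (eA t).apply_symm_apply (β t)
      exact this
    have coeProd : ∀ S : Finset (Fin d), ∃ L : List (Fin d), L.Nodup ∧
        (∀ t, t ∈ L ↔ t ∈ S) ∧
        ((∏ t ∈ S, Z t : ↥(cenAlg T hd)) : ∀ l, W l →ₗ[k] W l)
          = (L.map fun t => ((Z t : ∀ l, W l →ₗ[k] W l))).prod := by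
      intro S
      induction S using Finset.induction_on with
      | empty => exact ⟨[], List.nodup_nil, by simp, by simp⟩
      | insert _ _ hj =>
        rename_i j S' ih
        obtain ⟨L', hnd', hmemL', hcoe'⟩ := ih
        refine ⟨j :: L', List.nodup_cons.mpr ⟨fun h => hj ((hmemL' j).mp h), hnd'⟩,
          fun t => by simp [List.mem_cons, Finset.mem_insert, hmemL' t], ?_⟩
        rw [Finset.prod_insert hj, List.map_cons, List.prod_cons, ← hcoe',
          MulMemClass.coe_mul]
    obtain ⟨Lst, hnd, hmem', hcoe⟩ := coeProd (Finset.univ.erase i0)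
    have hi0L : i0 ∉ Lst := fun h => by simpa using (hmem' i0).mp h
    have hfold := foldL T hd Lst i0 hi0L hnd Z ((Z i0 : ∀ l, W l →ₗ[k] W l))
      (mem_cen T (Z i0).2) αv
    have htup : Function.update
        (fun t => if t ∈ Lst then ((Z t : ∀ l, W l →ₗ[k] W l) t).dualMap (αv t) else αv t)
        i0 (((Z i0 : ∀ l, W l →ₗ[k] W l) i0).dualMap (αv i0)) = β := by
      funext t
      rcases eq_or_ne t i0 with rfl | ht
      · rw [Function.update_self, hZ]
      · rw [Function.update_of_ne ht, if_pos ((hmem' t).mpr (by simp [ht])), hZ]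
    have h1 : T β = T (Function.update αv i0
        ((((Z i0 : ∀ l, W l →ₗ[k] W l) *
          (Lst.map fun t => ((Z t : ∀ l, W l →ₗ[k] W l))).prod) i0).dualMap (αv i0))) := by
      rw [← htup]
      exact hfold
    have hprodsplit : ((∏ t, Z t : ↥(cenAlg T hd)) : ∀ l, W l →ₗ[k] W l)
        = (Z i0 : ∀ l, W l →ₗ[k] W l) *
          (Lst.map fun t => ((Z t : ∀ l, W l →ₗ[k] W l))).prod := by
      rw [show (∏ t, Z t) = Z i0 * ∏ t ∈ Finset.univ.erase i0, Z t from
        (Finset.mul_prod_erase Finset.univ Z (Finset.mem_univ i0)).symm,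
        MulMemClass.coe_mul, hcoe]
    have h2 : (L0 ∘ₗ evA T hd i0 (αv i0)) (∏ t, Z t) = T (Function.update αv i0
        ((((∏ t, Z t : ↥(cenAlg T hd)) : ∀ l, W l →ₗ[k] W l) i0).dualMap (αv i0))) := rfl
    rw [h1, h2, hprodsplit]

end Stmt13
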